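/- If C is the split octonion algebra over a field k of characteristic ≠ 2,3, then the Albert algebra H(C; 1,−1,1) contains two non-proportional orthogonal nontrivial nilpotent elements (i.e., elements a, b with a∘a = 0, b∘b = 0, a∘b = 0, a,b ≠ 0, and a,b not scalar multiples of each other). -/
import Mathlib


open Matrix

/-- An octonion algebra over a field `k`: an 8-dimensional unital (possibly
non-associative) `k`-algebra with a conjugation, a "real part" functional and a
multiplicative nondegenerate norm (quadratic) form. -/
structure OctonionAlgebra (k : Type) [Field k] where
  V : Type
  [ring : NonAssocRing V]
  [mod : Module k V]
  [sct : IsScalarTower k V V]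
  [scc : SMulCommClass k V V]
  conj : V →ₗ[k] V
  re : V →ₗ[k] k
  re_one : re 1 = 1
  conj_one : conj 1 = 1
  conj_conj : ∀ x, conj (conj x) = x
  conj_mul : ∀ x y, conj (x * y) = conj y * conj x
  add_conj : ∀ x, x + conj x = (2 * re x) • 1
  N : QuadraticForm k V
  mul_conj : ∀ x, x * conj x = N x • (1 : V)
  N_one : N 1 = 1
  N_mul : ∀ x y, N (x * y) = N x * N y
  N_nondeg : (QuadraticMap.polarBilin N).Nondegenerate
  finrank_eq : Module.finrank k V = 8

attribute [instance] OctonionAlgebra.ring OctonionAlgebra.mod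
  OctonionAlgebra.sct OctonionAlgebra.scc

variable {k : Type} [Field k] (C : OctonionAlgebra k)

/-- `Γ = diag(1,−1,1)`, as a matrix with entries in `C`. -/
def Gam : Matrix (Fin 3) (Fin 3) C.V := Matrix.diagonal ![1, -1, 1]

/-- A matrix over the octonions is `Γ`-hermitian (for `Γ = diag(1,−1,1)`,
which is its own inverse) if `Γ (θ̄)ᵀ Γ = θ`. -/
def IsHerm (θ : Matrix (Fin 3) (Fin 3) C.V) : Prop :=
  Gam C * (θ.transpose.map C.conj) * Gam C = θ

/-- The Jordan product `x∘y = (x·y + y·x)/2`. -/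
def jmul (x y : Matrix (Fin 3) (Fin 3) C.V) : Matrix (Fin 3) (Fin 3) C.V :=
  ((2 : k)⁻¹) • (x * y + y * x)

/-- The scalar trace of a matrix over the octonions. -/
def mtr (θ : Matrix (Fin 3) (Fin 3) C.V) : k := C.re (Matrix.trace θ)

/-- The norm form `Q(x) = tr(x²)/2` on hermitian matrices. -/
def Qn (x : Matrix (Fin 3) (Fin 3) C.V) : k := mtr C (x * x) / 2

/-- The trace bilinear form `⟨x, y⟩ = tr(x∘y)`. -/
def ip (x y : Matrix (Fin 3) (Fin 3) C.V) : k := mtr C (jmul C x y)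

/-- The primitive idempotent `u = diag(0,0,1)`. -/
def uIdem : Matrix (Fin 3) (Fin 3) C.V := Matrix.diagonal ![0, 0, 1]

set_option maxHeartbeats 1000000 in
/-- if `C` is the split octonion algebra (its norm form is
isotropic), then `H(C;1,−1,1)` contains two non-proportional orthogonal
nontrivial nilpotent elements. -/
theorem split_two_orthogonal_nilpotents (h2 : (2 : k) ≠ 0) (h3 : (3 : k) ≠ 0)
    (hsplit : ∃ c : C.V, c ≠ 0 ∧ C.N c = 0) :
    ∃ a b : Matrix (Fin 3) (Fin 3) C.V,
      IsHerm C a ∧ IsHerm C b ∧ a ≠ 0 ∧ b ≠ 0 ∧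
      jmul C a a = 0 ∧ jmul C b b = 0 ∧ jmul C a b = 0 ∧
      (∀ s : k, b ≠ s • a) ∧ (∀ s : k, a ≠ s • b) := by
  classical
  obtain ⟨c, hc0, hcN⟩ := hsplit
  -- basic facts about c
  have hconj : C.conj c = (2 * C.re c) • (1 : C.V) - c := by
    have h := C.add_conj c
    linear_combination (norm := module) h
  have hcc : c * C.conj c = 0 := by rw [C.mul_conj, hcN, zero_smul]
  have hcomm : C.conj c * c = c * C.conj c := by
    rw [hconj, sub_mul, mul_sub, smul_mul_assoc, mul_smul_comm, one_mul, mul_one]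
  have hcc' : C.conj c * c = 0 := by rw [hcomm, hcc]
  have hcbar0 : C.conj c ≠ 0 := by
    intro h
    apply hc0
    have := congrArg C.conj h
    rwa [C.conj_conj, map_zero] at this
  set d := C.conj c with hd
  -- the two matrices
  refine ⟨Matrix.of ![![0, c, 0], ![-d, 0, 0], ![0, 0, 0]],
          Matrix.of ![![0, 0, 0], ![0, 0, d], ![0, -c, 0]], ?_, ?_, ?_, ?_, ?_, ?_, ?_, ?_, ?_⟩
  · -- IsHerm a
    unfold IsHerm Gam
    ext i j
    fin_cases i <;> fin_cases j <;>
      simp [Matrix.mul_apply, Matrix.transpose, Matrix.vecHead, Matrix.vecTail, Matrix.map_apply, Fin.sum_univ_three, hd, C.conj_conj, C.conj_one, map_neg]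
  · -- IsHerm b
    unfold IsHerm Gam
    ext i j
    fin_cases i <;> fin_cases j <;>
      simp [Matrix.mul_apply, Matrix.transpose, Matrix.vecHead, Matrix.vecTail, Matrix.map_apply, Fin.sum_univ_three, hd, C.conj_conj, C.conj_one, map_neg]
  · -- a ≠ 0
    intro h
    have := congrFun (congrFun h 0) 1
    simp at this
    exact hc0 this
  · -- b ≠ 0
    intro h
    have := congrFun (congrFun h 1) 2
    simp at this
    exact hcbar0 this
  · -- jmul a a = 0
    unfold jmul
    ext i j
    fin_cases i <;> fin_cases j <;>
      simp [Matrix.mul_apply, Matrix.vecHead, Matrix.vecTail, Fin.sum_univ_three, hcc, hcc']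
  · -- jmul b b = 0
    unfold jmul
    ext i j
    fin_cases i <;> fin_cases j <;>
      simp [Matrix.mul_apply, Matrix.vecHead, Matrix.vecTail, Fin.sum_univ_three, hcc, hcc']
  · -- jmul a b = 0
    unfold jmul
    ext i j
    fin_cases i <;> fin_cases j <;>
      simp [Matrix.mul_apply, Matrix.vecHead, Matrix.vecTail, Fin.sum_univ_three, hcc, hcc']
  · -- b not proportional to a
    intro s h
    have := congrFun (congrFun h 1) 2
    simp at this
    exact hcbar0 this
  · -- a not proportional to b
    intro s h
    have := congrFun (congrFun h 0) 1
    simp at this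
    exact hc0 this
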